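/- Let P be a GMMN instance whose intersection graph IG[P] admits a tree decomposition of width at most tw, and let N* ∈ Opt(P) be an optimal solution for P. Then every feasible solution N ∈ Feas(P) satisfies ‖N‖ ≤ (tw + 1)·‖N*‖. (Corollary B.3.) -/

import Mathlib

noncomputable section
open scoped Classical

/-- A point in the Euclidean plane. -/
abbrev Point : Type := ℝ × ℝ

/-- The Manhattan distance `d(p, q)`. -/
def manh (p q : Point) : ℝ := |p.1 - q.1| + |p.2 - q.2|

/-- The Euclidean length `‖pq‖` of the segment between `p` and `q`. -/
def euclen (p q : Point) : ℝ := Real.sqrt ((p.1 - q.1) ^ 2 + (p.2 - q.2) ^ 2)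

/-- The segment `pq` is axis-aligned. -/
def axisAligned (p q : Point) : Prop := p.1 = q.1 ∨ p.2 = q.2

/-- `z` lies in the bounding box `B(a, b)` (componentwise between `a ⊓ b` and `a ⊔ b`). -/
def inBox (a b z : Point) : Prop := a ⊓ b ≤ z ∧ z ≤ a ⊔ b

lemma euclen_comm (p q : Point) : euclen p q = euclen q p := by
  unfold euclen; ring_nf

/-- Length of an (unordered) edge. -/
def sym2Len : Sym2 Point → ℝ := Sym2.lift ⟨euclen, euclen_comm⟩

/-- The length of a network, given by its (finite) edge set. -/
def netLength (N : Finset (Sym2 Point)) : ℝ := ∑ e ∈ N, sym2Len e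

/-- A (simple) path in the plane, given by its sequence of (distinct) vertices. -/
structure GPath where
  k : ℕ
  pts : Fin (k + 1) → Point
  inj : Function.Injective pts

/-- The `i`-th edge of a path. -/
def GPath.edge (π : GPath) (i : Fin π.k) : Sym2 Point :=
  s(π.pts i.castSucc, π.pts i.succ)

/-- The edge set of a path. -/
def GPath.edges (π : GPath) : Finset (Sym2 Point) :=
  Finset.image π.edge Finset.univ

/-- The total (Euclidean) length of a path. -/
def GPath.length (π : GPath) : ℝ :=
  ∑ i : Fin π.k, euclen (π.pts i.castSucc) (π.pts i.succ)

/-- `π` is a Manhattan path (M-path) for the pair `(s, t)`: an `s`–`t` path all of whose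
edges are axis-aligned and whose total length equals the Manhattan distance `d(s, t)`. -/
def IsMPath (s t : Point) (π : GPath) : Prop :=
  π.pts 0 = s ∧ π.pts (Fin.last π.k) = t ∧
  (∀ i : Fin π.k, axisAligned (π.pts i.castSucc) (π.pts i.succ)) ∧
  π.length = manh s t

/-- A GMMN instance: a finite set of pairs of points. -/
abbrev Inst : Type := Finset (Point × Point)

/-- The vertex set of the Hanan grid `H(P)`. -/
def hananV (P : Inst) : Finset Point :=
  ((P.image fun v => v.1.1) ∪ (P.image fun v => v.2.1)) ×ˢ
  ((P.image fun v => v.1.2) ∪ (P.image fun v => v.2.2))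

/-- `{p, q}` is an edge of the Hanan grid `H(P)`: an axis-aligned segment between two distinct
grid vertices containing no third grid vertex. -/
def IsHananEdge (P : Inst) (p q : Point) : Prop :=
  p ∈ hananV P ∧ q ∈ hananV P ∧ p ≠ q ∧ axisAligned p q ∧
  ∀ z ∈ hananV P, inBox p q z → z = p ∨ z = q

/-- All edges of the path `π` are edges of the Hanan grid `H(P)`. -/
def OnGrid (P : Inst) (π : GPath) : Prop :=
  ∀ i : Fin π.k, IsHananEdge P (π.pts i.castSucc) (π.pts i.succ)

/-- `π ∈ Π_P(u)`: an M-path for the pair `u` that is a subgraph of the Hanan grid `H(P)`. -/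
def InPi (P : Inst) (u : Point × Point) (π : GPath) : Prop :=
  IsMPath u.1 u.2 π ∧ OnGrid P π

/-- The network `∪_{v ∈ P} π_v` determined by a choice of M-paths. -/
def netOf (P : Inst) (f : Point × Point → GPath) : Finset (Sym2 Point) :=
  P.biUnion fun v => (f v).edges

/-- `f` gives a feasible solution in `Feas(P)`: an M-path on the Hanan grid for each pair. -/
def IsFeasChoice (P : Inst) (f : Point × Point → GPath) : Prop :=
  ∀ v ∈ P, InPi P v (f v)

/-- `f` gives an optimal solution in `Opt(P)`. -/
def IsOptChoice (P : Inst) (f : Point × Point → GPath) : Prop :=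
  IsFeasChoice P f ∧
  ∀ g : Point × Point → GPath, IsFeasChoice P g →
    netLength (netOf P f) ≤ netLength (netOf P g)

/-- Adjacency in the intersection graph `IG[P]`: `u ≠ v` and the induced subgrids
`H(P, u)` and `H(P, v)` share an edge. -/
def IGAdj (P : Inst) (u v : Point × Point) : Prop :=
  u ≠ v ∧ ∃ p q : Point, IsHananEdge P p q ∧
    inBox u.1 u.2 p ∧ inBox u.1 u.2 q ∧ inBox v.1 v.2 p ∧ inBox v.1 v.2 q

/-- The total length `‖π₁ ∩ π₂‖` of the segments shared by two paths. -/
def sharedLen (π₁ π₂ : GPath) : ℝ := netLength (π₁.edges ∩ π₂.edges)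

/-- A pair `(p, q)` with `p_x ≤ q_x` is regular if `p_y ≤ q_y`. -/
def Regular (u : Point × Point) : Prop := u.1.1 ≤ u.2.1 ∧ u.1.2 ≤ u.2.2

/-- A pair `(p, q)` with `p_x ≤ q_x` is flipped if `p_y ≥ q_y`. -/
def Flipped (u : Point × Point) : Prop := u.1.1 ≤ u.2.1 ∧ u.2.2 ≤ u.1.2

/-- The intersection graph `IG[P]` as a simple graph on the pairs of `P`. -/
def IG (P : Inst) : SimpleGraph {v : Point × Point // v ∈ P} where
  Adj u v := IGAdj P u.1 v.1
  symm := ⟨by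
    rintro u v ⟨hne, p, q, he, h1, h2, h3, h4⟩
    exact ⟨hne.symm, p, q, he, h3, h4, h1, h2⟩⟩
  loopless := ⟨fun u h => h.1 rfl⟩

lemma sym2Len_nonneg (e : Sym2 Point) : 0 ≤ sym2Len e := by
  induction e using Sym2.ind with
  | _ p q => exact Real.sqrt_nonneg _

lemma sym2Len_mk (p q : Point) : sym2Len s(p, q) = euclen p q := rfl

lemma euclen_of_axisAligned {p q : Point} (h : axisAligned p q) :
    euclen p q = |p.1 - q.1| + |p.2 - q.2| := by
  rcases h with h | h
  · rw [euclen, h]; simp [Real.sqrt_sq_eq_abs]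
  · rw [euclen, h]; simp [Real.sqrt_sq_eq_abs]

lemma prefix_bound {k m : ℕ} (hm : m ≤ k) (gg : ℕ → ℝ)
    (h : ∑ i ∈ Finset.range k, |gg i| = |∑ i ∈ Finset.range k, gg i|) :
    min 0 (∑ i ∈ Finset.range k, gg i) ≤ ∑ i ∈ Finset.range m, gg i ∧
    ∑ i ∈ Finset.range m, gg i ≤ max 0 (∑ i ∈ Finset.range k, gg i) := by
  set A := ∑ i ∈ Finset.range m, gg i with hA
  set B := ∑ i ∈ Finset.Ico m k, gg i with hB
  have hsplit : A + B = ∑ i ∈ Finset.range k, gg i := by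
    rw [hA, hB, Finset.range_eq_Ico, Finset.range_eq_Ico]
    exact Finset.sum_Ico_consecutive _ (Nat.zero_le m) hm
  have hsplitabs : (∑ i ∈ Finset.range m, |gg i|) + ∑ i ∈ Finset.Ico m k, |gg i|
      = ∑ i ∈ Finset.range k, |gg i| := by
    rw [Finset.range_eq_Ico, Finset.range_eq_Ico]
    exact Finset.sum_Ico_consecutive _ (Nat.zero_le m) hm
  have h1 : |A| ≤ ∑ i ∈ Finset.range m, |gg i| := Finset.abs_sum_le_sum_abs _ _
  have h2 : |B| ≤ ∑ i ∈ Finset.Ico m k, |gg i| := Finset.abs_sum_le_sum_abs _ _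
  have hkey : |A| + |B| ≤ |A + B| := by rw [hsplit, ← h, ← hsplitabs]; linarith
  rw [← hsplit]
  constructor <;>
    [rcases abs_cases A with ⟨e1, _⟩ | ⟨e1, _⟩ <;>
      rcases abs_cases B with ⟨e2, _⟩ | ⟨e2, _⟩ <;>
      rcases abs_cases (A + B) with ⟨e3, _⟩ | ⟨e3, _⟩ <;>
      simp [min_def] <;> split_ifs <;> linarith;
     rcases abs_cases A with ⟨e1, _⟩ | ⟨e1, _⟩ <;>
      rcases abs_cases B with ⟨e2, _⟩ | ⟨e2, _⟩ <;>
      rcases abs_cases (A + B) with ⟨e3, _⟩ | ⟨e3, _⟩ <;>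
      simp [max_def] <;> split_ifs <;> linarith]

lemma mpath_mem_box {s t : Point} {π : GPath} (h : IsMPath s t π) (j : Fin (π.k + 1)) :
    inBox s t (π.pts j) := by
  obtain ⟨h0, hlast, hax, hlen⟩ := h
  set fx : ℕ → ℝ := fun n => if hn : n < π.k + 1 then (π.pts ⟨n, hn⟩).1 else 0 with hfxdef
  set fy : ℕ → ℝ := fun n => if hn : n < π.k + 1 then (π.pts ⟨n, hn⟩).2 else 0 with hfydef
  have hfx : ∀ jj : Fin (π.k + 1), fx jj.val = (π.pts jj).1 := by
    intro jj; simp [hfxdef, jj.isLt]; intro h; exact absurd h (by have := jj.isLt; omega)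
  have hfy : ∀ jj : Fin (π.k + 1), fy jj.val = (π.pts jj).2 := by
    intro jj; simp [hfydef, jj.isLt]; intro h; exact absurd h (by have := jj.isLt; omega)
  set gx : ℕ → ℝ := fun n => fx (n + 1) - fx n with hgxdef
  set gy : ℕ → ℝ := fun n => fy (n + 1) - fy n with hgydef
  have hcs : ∀ i : Fin π.k, (i.castSucc : Fin (π.k + 1)).val = i.val := fun i => rfl
  have hsc : ∀ i : Fin π.k, (i.succ : Fin (π.k + 1)).val = i.val + 1 := fun i => rfl
  have hedge : ∀ i : Fin π.k,
      euclen (π.pts i.castSucc) (π.pts i.succ) = |gx i.val| + |gy i.val| := by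
    intro i
    rw [euclen_of_axisAligned (hax i), hgxdef, hgydef]
    have e1 : fx (i.val + 1) = (π.pts i.succ).1 := by rw [← hsc i]; exact hfx _
    have e2 : fx i.val = (π.pts i.castSucc).1 := by rw [← hcs i]; exact hfx _
    have e3 : fy (i.val + 1) = (π.pts i.succ).2 := by rw [← hsc i]; exact hfy _
    have e4 : fy i.val = (π.pts i.castSucc).2 := by rw [← hcs i]; exact hfy _
    simp only [e1, e2, e3, e4]
    rw [abs_sub_comm ((π.pts i.succ).1), abs_sub_comm ((π.pts i.succ).2)]
  have hlen2 : π.length = (∑ i ∈ Finset.range π.k, |gx i|) + ∑ i ∈ Finset.range π.k, |gy i| := by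
    rw [GPath.length, ← Finset.sum_add_distrib]
    rw [Finset.sum_congr rfl (fun i _ => hedge i)]
    exact Fin.sum_univ_eq_sum_range (fun n => |gx n| + |gy n|) π.k
  have hfx0 : fx 0 = s.1 := by
    have := hfx 0; rw [h0] at this; simpa using this
  have hfy0 : fy 0 = s.2 := by
    have := hfy 0; rw [h0] at this; simpa using this
  have hfxk : fx π.k = t.1 := by
    have := hfx (Fin.last π.k); rw [hlast] at this; simpa [Fin.last] using this
  have hfyk : fy π.k = t.2 := by
    have := hfy (Fin.last π.k); rw [hlast] at this; simpa [Fin.last] using this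
  have htelx : ∑ i ∈ Finset.range π.k, gx i = t.1 - s.1 := by
    rw [hgxdef]; rw [Finset.sum_range_sub fx π.k, hfxk, hfx0]
  have htely : ∑ i ∈ Finset.range π.k, gy i = t.2 - s.2 := by
    rw [hgydef]; rw [Finset.sum_range_sub fy π.k, hfyk, hfy0]
  have hmanh : manh s t = |∑ i ∈ Finset.range π.k, gx i| + |∑ i ∈ Finset.range π.k, gy i| := by
    rw [htelx, htely, manh, abs_sub_comm s.1, abs_sub_comm s.2]
  have hxle : |∑ i ∈ Finset.range π.k, gx i| ≤ ∑ i ∈ Finset.range π.k, |gx i| :=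
    Finset.abs_sum_le_sum_abs _ _
  have hyle : |∑ i ∈ Finset.range π.k, gy i| ≤ ∑ i ∈ Finset.range π.k, |gy i| :=
    Finset.abs_sum_le_sum_abs _ _
  have hlen3 : (∑ i ∈ Finset.range π.k, |gx i|) + ∑ i ∈ Finset.range π.k, |gy i|
      = |∑ i ∈ Finset.range π.k, gx i| + |∑ i ∈ Finset.range π.k, gy i| := by
    rw [← hlen2, hlen, hmanh]
  have hxeq : ∑ i ∈ Finset.range π.k, |gx i| = |∑ i ∈ Finset.range π.k, gx i| := by linarith
  have hyeq : ∑ i ∈ Finset.range π.k, |gy i| = |∑ i ∈ Finset.range π.k, gy i| := by linarith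
  have hjle : j.val ≤ π.k := Nat.lt_succ_iff.mp j.isLt
  have hbx := prefix_bound hjle gx hxeq
  have hby := prefix_bound hjle gy hyeq
  have hpx : ∑ i ∈ Finset.range j.val, gx i = (π.pts j).1 - s.1 := by
    rw [hgxdef, Finset.sum_range_sub fx j.val, hfx0, hfx j]
  have hpy : ∑ i ∈ Finset.range j.val, gy i = (π.pts j).2 - s.2 := by
    rw [hgydef, Finset.sum_range_sub fy j.val, hfy0, hfy j]
  rw [hpx, htelx] at hbx
  rw [hpy, htely] at hby
  obtain ⟨hbx1, hbx2⟩ := hbx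
  obtain ⟨hby1, hby2⟩ := hby
  constructor
  · constructor
    · rw [Prod.fst_inf]
      rcases le_total s.1 t.1 with hc | hc <;> simp [min_def, hc] <;>
        rcases le_total (0 : ℝ) (t.1 - s.1) with hd | hd <;>
        simp [min_def, hd] at hbx1 <;> linarith
    · rw [Prod.snd_inf]
      rcases le_total s.2 t.2 with hc | hc <;> simp [min_def, hc] <;>
        rcases le_total (0 : ℝ) (t.2 - s.2) with hd | hd <;>
        simp [min_def, hd] at hby1 <;> linarith
  · constructor
    · rw [Prod.fst_sup]
      rcases le_total s.1 t.1 with hc | hc <;> simp [max_def, hc] <;>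
        rcases le_total (0 : ℝ) (t.1 - s.1) with hd | hd <;>
        simp [max_def, hd] at hbx2 <;> linarith
    · rw [Prod.snd_sup]
      rcases le_total s.2 t.2 with hc | hc <;> simp [max_def, hc] <;>
        rcases le_total (0 : ℝ) (t.2 - s.2) with hd | hd <;>
        simp [max_def, hd] at hby2 <;> linarith

lemma GPath.edge_injective (π : GPath) : Function.Injective π.edge := by
  intro i j h
  rw [GPath.edge, GPath.edge, Sym2.eq_iff] at h
  rcases h with ⟨h1, _⟩ | ⟨h1, h2⟩
  · exact Fin.castSucc_injective _ (π.inj h1)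
  · have e1 := π.inj h1
    have e2 := π.inj h2
    have hv1 : (i : ℕ) = (j : ℕ) + 1 := congrArg Fin.val e1
    have hv2 : (i : ℕ) + 1 = (j : ℕ) := congrArg Fin.val e2
    exact Fin.ext (by omega)

lemma GPath.netLength_edges (π : GPath) : netLength π.edges = π.length := by
  rw [netLength, GPath.edges,
    Finset.sum_image (fun a _ b _ hab => π.edge_injective hab)]
  rfl

section TreeHelly
open SimpleGraph
variable {ι : Type*} {T : SimpleGraph ι}

lemma walk_of_induce_connected {A : Set ι} (hA : (T.induce A).Connected)
    {a b : ι} (ha : a ∈ A) (hb : b ∈ A) :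
    ∃ w : T.Walk a b, ∀ v ∈ w.support, v ∈ A := by
  obtain ⟨w⟩ := hA ⟨a, ha⟩ ⟨b, hb⟩
  refine ⟨w.map (SimpleGraph.Embedding.induce A).toHom, ?_⟩
  intro v hv
  replace hv : v ∈ (w.map (SimpleGraph.Embedding.induce A).toHom).support := hv
  rw [SimpleGraph.Walk.support_map] at hv
  obtain ⟨u, _, rfl⟩ := List.mem_map.mp hv
  exact u.2

lemma reachable_induce_of_walk {A : Set ι} :
    ∀ {a b : ι} (w : T.Walk a b), (∀ v ∈ w.support, v ∈ A) →
    ∀ (ha : a ∈ A) (hb : b ∈ A), (T.induce A).Reachable ⟨a, ha⟩ ⟨b, hb⟩ := by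
  intro a b w
  induction w with
  | nil => intro _ ha hb; rfl
  | @cons u c d h p ih =>
    intro hsup ha hb
    have hc : c ∈ A := hsup c (by simp [SimpleGraph.Walk.support_cons])
    have hadj : (T.induce A).Adj ⟨u, ha⟩ ⟨c, hc⟩ := by
      simp only [SimpleGraph.comap_adj, Function.Embedding.coe_subtype]
      exact h
    exact hadj.reachable.trans
      (ih (fun v hv => hsup v (by simp [SimpleGraph.Walk.support_cons, hv])) hc hb)

lemma path_support_subset (hT : T.IsTree) {A : Set ι} (hA : (T.induce A).Connected)
    {a b : ι} (ha : a ∈ A) (hb : b ∈ A) {p : T.Walk a b} (hp : p.IsPath) :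
    ∀ v ∈ p.support, v ∈ A := by
  obtain ⟨w, hw⟩ := walk_of_induce_connected hA ha hb
  have heq : p = w.bypass := (hT.existsUnique_path a b).unique hp w.bypass_isPath
  intro v hv
  exact hw v (w.support_bypass_subset (heq ▸ hv))

lemma inter_connected (hT : T.IsTree) {A B : Set ι}
    (hA : (T.induce A).Connected) (hB : (T.induce B).Connected)
    (hne : (A ∩ B).Nonempty) : (T.induce (A ∩ B)).Connected := by
  rw [SimpleGraph.connected_iff]
  refine ⟨?_, ?_⟩
  · rintro ⟨x, hxA, hxB⟩ ⟨y, hyA, hyB⟩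
    obtain ⟨p, hp⟩ := (hT.existsUnique_path x y)
    have hsA := path_support_subset hT hA hxA hyA hp.1
    have hsB := path_support_subset hT hB hxB hyB hp.1
    exact reachable_induce_of_walk p (fun v hv => Set.mem_inter (hsA v hv) (hsB v hv)) _ _
  · obtain ⟨x, hx⟩ := hne
    exact ⟨⟨x, hx⟩⟩

lemma exists_first {Q : Set ι} :
    ∀ {a b : ι} (w : T.Walk a b), b ∈ Q →
    ∃ x, x ∈ Q ∧ ∃ (w1 : T.Walk a x) (w2 : T.Walk x b),
      w1.append w2 = w ∧ ∀ v ∈ w1.support, v ∈ Q → v = x := by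
  intro a b w
  induction w with
  | nil =>
    intro hb
    exact ⟨_, hb, Walk.nil, Walk.nil, rfl, by simp⟩
  | @cons u c d h p ih =>
    intro hb
    by_cases hu : u ∈ Q
    · exact ⟨u, hu, Walk.nil, Walk.cons h p, rfl, by simp⟩
    · obtain ⟨x, hx, w1, w2, happ, hfirst⟩ := ih hb
      refine ⟨x, hx, Walk.cons h w1, w2, by rw [Walk.cons_append, happ], ?_⟩
      intro v hv hvQ
      rcases (by simpa [Walk.support_cons] using hv : v = u ∨ v ∈ w1.support) with rfl | hv'
      · exact absurd hvQ hu
      · exact hfirst v hv' hvQ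

lemma isPath_append {a x c : ι} {p : T.Walk a x} {q : T.Walk x c}
    (hp : p.IsPath) (hq : q.IsPath)
    (hj : ∀ v, v ∈ p.support → v ∈ q.support → v = x) : (p.append q).IsPath := by
  rw [Walk.isPath_def, Walk.support_append, List.nodup_append]
  refine ⟨hp.support_nodup, hq.support_nodup.tail, ?_⟩
  intro v hv1 v' hv2 hvv'
  subst hvv'
  have hvx : v = x := hj v hv1 (List.mem_of_mem_tail hv2)
  subst hvx
  have : q.support = v :: q.support.tail := q.support_eq_cons
  have hnd := hq.support_nodup
  rw [this] at hnd
  exact (List.nodup_cons.mp hnd).1 hv2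

lemma helly3 (hT : T.IsTree) {A B C : Set ι}
    (hA : (T.induce A).Connected) (hB : (T.induce B).Connected) (hC : (T.induce C).Connected)
    (hab : (A ∩ B).Nonempty) (hac : (A ∩ C).Nonempty) (hbc : (B ∩ C).Nonempty) :
    (A ∩ B ∩ C).Nonempty := by
  obtain ⟨a, haA, haB⟩ := hab
  obtain ⟨b, hbA, hbC⟩ := hac
  obtain ⟨c, hcB, hcC⟩ := hbc
  -- unique path a → b, inside A
  obtain ⟨p, hp⟩ := hT.existsUnique_path a b
  have hpA : ∀ v ∈ p.support, v ∈ A := path_support_subset hT hA haA hbA hp.1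
  -- unique path c → b, inside C
  obtain ⟨pcb, hpcb⟩ := hT.existsUnique_path c b
  have hpcbC : ∀ v ∈ pcb.support, v ∈ C := path_support_subset hT hC hcC hbC hpcb.1
  -- first vertex of p lying on pcb
  obtain ⟨x, hxQ, w1, w2, happ, hfirst⟩ :=
    exists_first (Q := {v | v ∈ pcb.support}) p (by exact pcb.end_mem_support)
  have hw1sub : ∀ v ∈ w1.support, v ∈ p.support := by
    intro v hv
    rw [← happ, Walk.mem_support_append_iff]
    exact Or.inl hv
  -- q1 : path a → x inside A, meeting pcb only at x
  set q1 := w1.bypass with hq1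
  have hq1path : q1.IsPath := w1.bypass_isPath
  have hq1sub : ∀ v ∈ q1.support, v ∈ p.support :=
    fun v hv => hw1sub v (w1.support_bypass_subset hv)
  have hq1first : ∀ v ∈ q1.support, v ∈ pcb.support → v = x :=
    fun v hv hvQ => hfirst v (w1.support_bypass_subset hv) hvQ
  -- r : path x → c inside pcb
  set r := (pcb.takeUntil x hxQ).reverse with hr
  have hrpath : r.IsPath := (hpcb.1.takeUntil hxQ).reverse
  have hrsub : ∀ v ∈ r.support, v ∈ pcb.support := by
    intro v hv
    rw [hr, Walk.support_reverse, List.mem_reverse] at hv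
    exact pcb.support_takeUntil_subset hxQ hv
  -- W : path a → c
  have hW : (q1.append r).IsPath :=
    isPath_append hq1path hrpath (fun v hv1 hv2 => hq1first v hv1 (hrsub v hv2))
  -- a, c ∈ B, so W ⊆ B, and x ∈ W
  have hWB : ∀ v ∈ (q1.append r).support, v ∈ B :=
    path_support_subset hT hB haB hcB hW
  have hxW : x ∈ (q1.append r).support := by
    rw [Walk.mem_support_append_iff]
    exact Or.inl q1.end_mem_support
  exact ⟨x, Set.mem_inter (Set.mem_inter (hpA x (hq1sub x q1.end_mem_support)) (hWB x hxW)) (hpcbC x hxQ)⟩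

lemma hellyList (hT : T.IsTree) :
    ∀ (n : ℕ) (l : List (Set ι)), l.length = n →
    (∀ A ∈ l, (T.induce A).Connected) →
    (∀ A ∈ l, ∀ B ∈ l, (A ∩ B).Nonempty) →
    l ≠ [] → ∃ t, ∀ A ∈ l, t ∈ A := by
  intro n
  induction n with
  | zero => intro l hl _ _ hne; cases l with
    | nil => exact absurd rfl hne
    | cons A t => simp at hl
  | succ n ih =>
    intro l hl hconn hpair hne
    match l, hl with
    | [A], _ =>
      obtain ⟨t, ht, _⟩ := hpair A (by simp) A (by simp)
      exact ⟨t, by simpa using ht⟩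
    | A :: B :: rest, hl =>
      have hA := hconn A (by simp)
      have hB := hconn B (by simp)
      have hABne : (A ∩ B).Nonempty := hpair A (by simp) B (by simp)
      have hABconn := inter_connected hT hA hB hABne
      have hlen : ((A ∩ B) :: rest).length = n := by simpa using hl
      have hconn' : ∀ C ∈ (A ∩ B) :: rest, (T.induce C).Connected := by
        intro C hC
        rcases List.mem_cons.mp hC with rfl | hC
        · exact hABconn
        · exact hconn C (by simp [hC])
      have hpair' : ∀ C ∈ (A ∩ B) :: rest, ∀ D ∈ (A ∩ B) :: rest, (C ∩ D).Nonempty := by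
        have key : ∀ D ∈ rest, ((A ∩ B) ∩ D).Nonempty := by
          intro D hD
          exact helly3 hT hA hB (hconn D (by simp [hD])) hABne
            (hpair A (by simp) D (by simp [hD])) (hpair B (by simp) D (by simp [hD]))
        intro C hC D hD
        rcases List.mem_cons.mp hC with rfl | hC
        · rcases List.mem_cons.mp hD with rfl | hD
          · rw [Set.inter_self]; exact hABne
          · exact key D hD
        · rcases List.mem_cons.mp hD with rfl | hD
          · rw [Set.inter_comm]; exact key C hC
          · exact hpair C (by simp [hC]) D (by simp [hD])
      obtain ⟨t, ht⟩ := ih ((A ∩ B) :: rest) hlen hconn' hpair' (by simp)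
      have htAB := ht (A ∩ B) (by simp)
      refine ⟨t, ?_⟩
      intro C hC
      rcases List.mem_cons.mp hC with rfl | hC
      · exact htAB.1
      rcases List.mem_cons.mp hC with rfl | hC
      · exact htAB.2
      · exact ht C (by simp [hC])

end TreeHelly

/-- Corollary B.3: if the intersection graph `IG[P]` admits a tree decomposition of width at
most `tw`, then every feasible solution has length at most `(tw + 1)` times the length of an
optimal solution. -/
theorem treewidth_approximation (P : Inst) (tw : ℕ)
    (ι : Type) [Fintype ι] (T : SimpleGraph ι) (hT : T.IsTree)
    (X : ι → Finset (Point × Point))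
    (hbag : ∀ t : ι, X t ⊆ P)
    (hwidth : ∀ t : ι, (X t).card ≤ tw + 1)
    (hT1 : ∀ v ∈ P, ∃ t : ι, v ∈ X t)
    (hT2 : ∀ u ∈ P, ∀ v ∈ P, IGAdj P u v → ∃ t : ι, u ∈ X t ∧ v ∈ X t)
    (hT3 : ∀ v ∈ P, (T.induce {t : ι | v ∈ X t}).Connected)
    (f g : Point × Point → GPath) (hf : IsOptChoice P f) (hg : IsFeasChoice P g) :
    netLength (netOf P g) ≤ ((tw : ℝ) + 1) * netLength (netOf P f) := by
  classical
  have hff : IsFeasChoice P f := hf.1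
  -- the multiplicity of each optimal edge is at most tw + 1
  have hcard : ∀ e ∈ netOf P f, (P.filter fun v => e ∈ (f v).edges).card ≤ tw + 1 := by
    intro e he
    set S := P.filter (fun v => e ∈ (f v).edges) with hS
    have hSP : ∀ v ∈ S, v ∈ P := fun v hv => (Finset.mem_filter.mp hv).1
    have hclq : ∀ u ∈ S, ∀ v ∈ S, u ≠ v → IGAdj P u v := by
      intro u hu v hv huv
      obtain ⟨huP, hue⟩ := Finset.mem_filter.mp hu
      obtain ⟨hvP, hve⟩ := Finset.mem_filter.mp hv
      obtain ⟨i, _, hi⟩ := Finset.mem_image.mp hue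
      obtain ⟨jj, _, hjj⟩ := Finset.mem_image.mp hve
      obtain ⟨hu1, hu2⟩ := hff u huP
      obtain ⟨hv1, hv2⟩ := hff v hvP
      have hse : s(((f v).pts jj.castSucc), ((f v).pts jj.succ))
          = s(((f u).pts i.castSucc), ((f u).pts i.succ)) := by
        have : (f v).edge jj = (f u).edge i := by rw [hjj, hi]
        simpa [GPath.edge] using this
      refine ⟨huv, (f u).pts i.castSucc, (f u).pts i.succ, hu2 i,
        mpath_mem_box hu1 _, mpath_mem_box hu1 _, ?_, ?_⟩
      · rcases Sym2.eq_iff.mp hse with ⟨ha, _⟩ | ⟨_, hb⟩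
        · rw [← ha]; exact mpath_mem_box hv1 _
        · rw [← hb]; exact mpath_mem_box hv1 _
      · rcases Sym2.eq_iff.mp hse with ⟨_, hb⟩ | ⟨ha, _⟩
        · rw [← hb]; exact mpath_mem_box hv1 _
        · rw [← ha]; exact mpath_mem_box hv1 _
    have hbagS : ∃ t : ι, ∀ v ∈ S, v ∈ X t := by
      by_cases hSe : S = ∅
      · obtain ⟨t⟩ := hT.isConnected.nonempty
        exact ⟨t, by simp [hSe]⟩
      · set l := S.toList.map (fun v => {t : ι | v ∈ X t}) with hl
        have hmem : ∀ A ∈ l, ∃ v ∈ S, A = {t : ι | v ∈ X t} := by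
          intro A hA
          obtain ⟨v, hv, rfl⟩ := List.mem_map.mp hA
          exact ⟨v, Finset.mem_toList.mp hv, rfl⟩
        have hconn : ∀ A ∈ l, (T.induce A).Connected := by
          intro A hA
          obtain ⟨v, hvS, rfl⟩ := hmem A hA
          exact hT3 v (hSP v hvS)
        have hpair : ∀ A ∈ l, ∀ B ∈ l, (A ∩ B).Nonempty := by
          intro A hA B hB
          obtain ⟨v, hvS, rfl⟩ := hmem A hA
          obtain ⟨w, hwS, rfl⟩ := hmem B hB
          by_cases hvw : v = w
          · subst hvw
            obtain ⟨t, ht⟩ := hT1 v (hSP v hvS)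
            exact ⟨t, Set.mem_inter ht ht⟩
          · obtain ⟨t, ht1, ht2⟩ := hT2 v (hSP v hvS) w (hSP w hwS) (hclq v hvS w hwS hvw)
            exact ⟨t, Set.mem_inter ht1 ht2⟩
        have hne : l ≠ [] := by
          rw [hl]
          simp only [ne_eq, List.map_eq_nil_iff, Finset.toList_eq_nil]
          exact hSe
        obtain ⟨t, ht⟩ := hellyList hT l.length l rfl hconn hpair hne
        refine ⟨t, fun v hv => ?_⟩
        exact ht _ (List.mem_map.mpr ⟨v, Finset.mem_toList.mpr hv, rfl⟩)
    obtain ⟨t, ht⟩ := hbagS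
    calc S.card ≤ (X t).card := Finset.card_le_card (fun v hv => ht v hv)
      _ ≤ tw + 1 := hwidth t
  -- the double-counting identity
  have hexch : ∀ h : Point × Point → GPath,
      ∑ v ∈ P, netLength ((h v).edges)
        = ∑ e ∈ netOf P h, ((P.filter fun v => e ∈ (h v).edges).card : ℝ) * sym2Len e := by
    intro h
    have hstep : ∀ v ∈ P, netLength ((h v).edges)
        = ∑ e ∈ netOf P h, if e ∈ (h v).edges then sym2Len e else 0 := by
      intro v hv
      have hsub : netOf P h ∩ (h v).edges = (h v).edges :=
        Finset.inter_eq_right.mpr (Finset.subset_biUnion_of_mem (fun v => (h v).edges) hv)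
      rw [netLength, Finset.sum_ite_mem, hsub]
    rw [Finset.sum_congr rfl hstep, Finset.sum_comm]
    refine Finset.sum_congr rfl (fun e _ => ?_)
    rw [← Finset.sum_filter, Finset.sum_const, nsmul_eq_mul]
  have hg1 : netLength (netOf P g) ≤ ∑ v ∈ P, netLength ((g v).edges) := by
    rw [hexch g, netLength]
    apply Finset.sum_le_sum
    intro e he
    have h1 : (1 : ℝ) ≤ ((P.filter fun v => e ∈ (g v).edges).card : ℝ) := by
      obtain ⟨v, hv, hev⟩ := Finset.mem_biUnion.mp he
      have hpos : 0 < (P.filter fun v => e ∈ (g v).edges).card :=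
        Finset.card_pos.mpr ⟨v, Finset.mem_filter.mpr ⟨hv, hev⟩⟩
      exact_mod_cast hpos
    calc sym2Len e = 1 * sym2Len e := (one_mul _).symm
      _ ≤ _ := mul_le_mul_of_nonneg_right h1 (sym2Len_nonneg e)
  have hf2 : ∑ v ∈ P, netLength ((f v).edges) ≤ ((tw : ℝ) + 1) * netLength (netOf P f) := by
    rw [hexch f, netLength, Finset.mul_sum]
    apply Finset.sum_le_sum
    intro e he
    have hc : ((P.filter fun v => e ∈ (f v).edges).card : ℝ) ≤ (tw : ℝ) + 1 := by
      exact_mod_cast hcard e he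
    exact mul_le_mul_of_nonneg_right hc (sym2Len_nonneg e)
  calc netLength (netOf P g) ≤ ∑ v ∈ P, netLength ((g v).edges) := hg1
    _ = ∑ v ∈ P, (g v).length := Finset.sum_congr rfl (fun v _ => (g v).netLength_edges)
    _ = ∑ v ∈ P, (f v).length := Finset.sum_congr rfl
        (fun v hv => by rw [((hg v hv).1).2.2.2, ((hff v hv).1).2.2.2])
    _ = ∑ v ∈ P, netLength ((f v).edges) :=
        Finset.sum_congr rfl (fun v _ => (f v).netLength_edges.symm)
    _ ≤ ((tw : ℝ) + 1) * netLength (netOf P f) := hf2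

end
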